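/- Under the no-risk-free-investment assumption (for every nonzero f ∈ ℝ^M_{≥0} there exists i with ⟨t_i/\hat{t}, f⟩ < 0), the set ∂G₀ = {f ∈ G : min_i ⟨t_i/\hat{t}, f⟩ = −1} equals the image of the compact set ∂B_ε(0) ∩ ℝ^M_{≥0} under the continuous map g(f) = f / |min_i ⟨t_i/\hat{t}, f⟩|, and is therefore compact and connected. -/

import Mathlib

section Stmt6Aux

variable {N M : ℕ} (T : Fin N → Fin M → ℝ) (that : Fin M → ℝ)

lemma stmt6_phi_smul (i : Fin N) (c : ℝ) (f : Fin M → ℝ) :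
    ∑ k, (T i k / that k) * (c • f) k = c * ∑ k, (T i k / that k) * f k := by
  rw [Finset.mul_sum]
  refine Finset.sum_congr rfl fun k _ => ?_
  simp only [Pi.smul_apply, smul_eq_mul]; ring

variable (hN : 0 < N)

noncomputable def stmt6m (f : Fin M → ℝ) : ℝ :=
  Finset.univ.inf' (Finset.univ_nonempty_iff.mpr ⟨⟨0, hN⟩⟩)
    (fun i : Fin N => ∑ k, (T i k / that k) * f k)

lemma stmt6m_le (f : Fin M → ℝ) (i : Fin N) :
    stmt6m T that hN f ≤ ∑ k, (T i k / that k) * f k :=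
  Finset.inf'_le _ (Finset.mem_univ i)

lemma stmt6m_exists (f : Fin M → ℝ) :
    ∃ i, stmt6m T that hN f = ∑ k, (T i k / that k) * f k := by
  obtain ⟨j, -, hj⟩ := Finset.exists_mem_eq_inf' (Finset.univ_nonempty_iff.mpr ⟨⟨0, hN⟩⟩)
    (fun i : Fin N => ∑ k, (T i k / that k) * f k)
  exact ⟨j, hj⟩

lemma le_stmt6m (f : Fin M → ℝ) (c : ℝ) (h : ∀ i, c ≤ ∑ k, (T i k / that k) * f k) :
    c ≤ stmt6m T that hN f :=
  Finset.le_inf' _ _ fun i _ => h i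

lemma stmt6m_smul (c : ℝ) (hc : 0 < c) (f : Fin M → ℝ) :
    stmt6m T that hN (c • f) = c * stmt6m T that hN f := by
  apply le_antisymm
  · obtain ⟨j, hj⟩ := stmt6m_exists T that hN f
    calc stmt6m T that hN (c • f) ≤ ∑ k, (T j k / that k) * (c • f) k :=
          stmt6m_le T that hN _ j
      _ = c * ∑ k, (T j k / that k) * f k := stmt6_phi_smul T that j c f
      _ = c * stmt6m T that hN f := by rw [hj]
  · refine le_stmt6m T that hN _ _ fun i => ?_
    rw [stmt6_phi_smul T that i c f]
    exact mul_le_mul_of_nonneg_left (stmt6m_le T that hN f i) hc.le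

lemma stmt6m_continuous : Continuous (stmt6m T that hN) := by
  refine Continuous.finset_inf'_apply _ fun i _ => ?_
  exact continuous_finset_sum _ fun k _ => continuous_const.mul (continuous_apply k)

lemma stmt6m_neg (ha : ∀ f : Fin M → ℝ, (∀ k, 0 ≤ f k) → f ≠ 0 →
      ∃ i, ∑ k, (T i k / that k) * f k < 0)
    (f : Fin M → ℝ) (hf0 : ∀ k, 0 ≤ f k) (hfne : f ≠ 0) :
    stmt6m T that hN f < 0 := by
  obtain ⟨i, hi⟩ := ha f hf0 hfne
  exact lt_of_le_of_lt (stmt6m_le T that hN f i) hi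

/-- membership in ∂G₀ in terms of the min functional -/
lemma stmt6_mem_iff (f : Fin M → ℝ) :
    (((∀ k, 0 ≤ f k) ∧ ∀ i, -1 ≤ ∑ k, (T i k / that k) * f k) ∧
      ∃ i, ∑ k, (T i k / that k) * f k = -1) ↔
    ((∀ k, 0 ≤ f k) ∧ stmt6m T that hN f = -1) := by
  constructor
  · rintro ⟨⟨h0, h1⟩, i, hi⟩
    refine ⟨h0, le_antisymm (hi ▸ stmt6m_le T that hN f i) (le_stmt6m T that hN f _ h1)⟩
  · rintro ⟨h0, hm⟩
    obtain ⟨j, hj⟩ := stmt6m_exists T that hN f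
    exact ⟨⟨h0, fun i => hm ▸ stmt6m_le T that hN f i⟩, j, by rw [← hj, hm]⟩

/-- the nonnegative orthant minus the origin is preconnected -/
lemma stmt6_orthant_preconnected (hM : 0 < M) :
    IsPreconnected {f : Fin M → ℝ | (∀ k, 0 ≤ f k) ∧ f ≠ 0} := by
  have : {f : Fin M → ℝ | (∀ k, 0 ≤ f k) ∧ f ≠ 0} =
      ⋃ j : Fin M, {f : Fin M → ℝ | (∀ k, 0 ≤ f k) ∧ 0 < f j} := by
    ext f
    simp only [Set.mem_setOf_eq, Set.mem_iUnion]
    constructor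
    · rintro ⟨h0, hne⟩
      obtain ⟨j, hj⟩ := Function.ne_iff.mp hne
      exact ⟨j, h0, lt_of_le_of_ne (h0 j) (Ne.symm (by simpa using hj))⟩
    · rintro ⟨j, h0, hj⟩
      refine ⟨h0, fun h => ?_⟩
      rw [h] at hj; simp at hj
  rw [this]
  haveI : Nonempty (Fin M) := ⟨⟨0, hM⟩⟩
  refine isPreconnected_iUnion ⟨fun _ => (1 : ℝ), ?_⟩ fun j => ?_
  · simp only [Set.mem_iInter, Set.mem_setOf_eq]
    exact fun j => ⟨fun k => zero_le_one, zero_lt_one⟩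
  · refine Convex.isPreconnected ?_
    intro x hx y hy a b ha hb hab
    refine ⟨fun k => add_nonneg (mul_nonneg ha (hx.1 k)) (mul_nonneg hb (hy.1 k)), ?_⟩
    rcases lt_or_eq_of_le ha with ha' | ha'
    · exact add_pos_of_pos_of_nonneg (mul_pos ha' hx.2) (mul_nonneg hb (hy.1 j))
    · have hb' : b = 1 := by linarith
      simp only [Pi.add_apply, Pi.smul_apply, smul_eq_mul, ← ha', hb']
      simpa using hy.2

end Stmt6Aux

/-- ∂G₀ is the image of the compact set ∂B_ε(0) ∩ ℝ^M_{≥0} under the continuous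
map f ↦ f / |min_i ⟨t_i/t̂, f⟩|, hence compact and connected. -/
theorem stmt6 (N M : ℕ) (hN : 0 < N) (hM : 0 < M)
    (T : Fin N → Fin M → ℝ) (that : Fin M → ℝ) (hthat : ∀ k, 0 < that k)
    (ha : ∀ f : Fin M → ℝ, (∀ k, 0 ≤ f k) → f ≠ 0 →
      ∃ i, ∑ k, (T i k / that k) * f k < 0)
    (ε : ℝ) (hε : 0 < ε) :
    {f : Fin M → ℝ | ((∀ k, 0 ≤ f k) ∧ ∀ i, -1 ≤ ∑ k, (T i k / that k) * f k) ∧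
        ∃ i, ∑ k, (T i k / that k) * f k = -1} =
      (fun f : Fin M → ℝ =>
        |Finset.univ.inf' (Finset.univ_nonempty_iff.mpr ⟨⟨0, hN⟩⟩)
          (fun i : Fin N => ∑ k, (T i k / that k) * f k)|⁻¹ • f) ''
        {f : Fin M → ℝ | (∑ k, f k ^ 2 = ε ^ 2) ∧ ∀ k, 0 ≤ f k} ∧
    IsCompact {f : Fin M → ℝ | ((∀ k, 0 ≤ f k) ∧ ∀ i, -1 ≤ ∑ k, (T i k / that k) * f k) ∧
        ∃ i, ∑ k, (T i k / that k) * f k = -1} ∧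
    IsConnected {f : Fin M → ℝ | ((∀ k, 0 ≤ f k) ∧ ∀ i, -1 ≤ ∑ k, (T i k / that k) * f k) ∧
        ∃ i, ∑ k, (T i k / that k) * f k = -1} := by
  set m := stmt6m T that hN with hm_def
  set g : (Fin M → ℝ) → (Fin M → ℝ) := fun f => |m f|⁻¹ • f with hg_def
  set S := {f : Fin M → ℝ | ((∀ k, 0 ≤ f k) ∧ ∀ i, -1 ≤ ∑ k, (T i k / that k) * f k) ∧
        ∃ i, ∑ k, (T i k / that k) * f k = -1} with hS_def
  set Sph := {f : Fin M → ℝ | (∑ k, f k ^ 2 = ε ^ 2) ∧ ∀ k, 0 ≤ f k} with hSph_def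
  set U := {f : Fin M → ℝ | (∀ k, 0 ≤ f k) ∧ f ≠ 0} with hU_def
  have hmemS : ∀ f, f ∈ S ↔ ((∀ k, 0 ≤ f k) ∧ m f = -1) := fun f =>
    stmt6_mem_iff T that hN f
  -- on U, m is negative
  have hmneg : ∀ f ∈ U, m f < 0 := fun f hf => stmt6m_neg T that hN ha f hf.1 hf.2
  -- g maps U into S, and fixes S
  have hgU : ∀ f ∈ U, g f ∈ S := by
    intro f hf
    have hneg := hmneg f hf
    have hc : (0:ℝ) < |m f|⁻¹ := inv_pos.mpr (abs_pos.mpr hneg.ne)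
    rw [hmemS]
    constructor
    · intro k
      exact mul_nonneg hc.le (hf.1 k)
    · show m (|m f|⁻¹ • f) = -1
      rw [hm_def, stmt6m_smul T that hN _ hc f, abs_of_neg hneg, ← hm_def, inv_neg,
        neg_mul, inv_mul_cancel₀ hneg.ne]
  have hgS : ∀ f ∈ S, g f = f := by
    intro f hf
    rw [hmemS] at hf
    show |m f|⁻¹ • f = f
    rw [hf.2]; norm_num
  have hSU : S ⊆ U := by
    intro f hf
    have hf' := (hmemS f).mp hf
    refine ⟨hf'.1, fun h0 => ?_⟩
    have : m 0 = -1 := h0 ▸ hf'.2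
    have h00 : m 0 = 0 := by
      obtain ⟨j, hj⟩ := stmt6m_exists T that hN (0 : Fin M → ℝ)
      simpa using hj
    rw [h00] at this; norm_num at this
  have hSphU : Sph ⊆ U := by
    intro f hf
    refine ⟨hf.2, fun h0 => ?_⟩
    have := hf.1
    rw [h0] at this
    simp at this
    nlinarith
  -- first claim : S = g '' Sph
  have hEq : S = g '' Sph := by
    apply Set.Subset.antisymm
    · intro f hf
      have hfU := hSU hf
      have hf' := (hmemS f).mp hf
      have hr2 : 0 < ∑ k, f k ^ 2 := by
        obtain ⟨j, hj⟩ := Function.ne_iff.mp hfU.2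
        have hj' : f j ≠ 0 := by simpa using hj
        have : 0 < f j ^ 2 := lt_of_le_of_ne (sq_nonneg _) (Ne.symm (pow_ne_zero 2 hj'))
        exact Finset.sum_pos' (fun k _ => sq_nonneg _) ⟨j, Finset.mem_univ j, this⟩
      set r : ℝ := Real.sqrt (∑ k, f k ^ 2) with hr_def
      have hr : 0 < r := Real.sqrt_pos.mpr hr2
      have hrsq : r ^ 2 = ∑ k, f k ^ 2 := Real.sq_sqrt hr2.le
      refine ⟨(ε / r) • f, ⟨?_, fun k => mul_nonneg (div_nonneg hε.le hr.le) (hf'.1 k)⟩, ?_⟩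
      · have : ∀ k, ((ε / r) • f) k ^ 2 = (ε / r) ^ 2 * f k ^ 2 := by
          intro k; simp [mul_pow]
        rw [Finset.sum_congr rfl fun k _ => this k, ← Finset.mul_sum, ← hrsq]
        field_simp
      · show |m ((ε / r) • f)|⁻¹ • (ε / r) • f = f
        have hc : (0:ℝ) < ε / r := by positivity
        have hf2 : stmt6m T that hN f = -1 := hf'.2
        rw [hm_def, stmt6m_smul T that hN _ hc f, hf2, smul_smul]
        rw [abs_of_neg (by linarith [mul_neg_of_pos_of_neg hc (show (-1:ℝ) < 0 by norm_num)] : ε / r * (-1) < 0)]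
        have : -(ε / r * (-1)) = ε / r := by ring
        rw [this, inv_mul_cancel₀ hc.ne', one_smul]
    · rintro f ⟨x, hx, rfl⟩
      exact hgU x (hSphU hx)
  have hgcont : ContinuousOn g U := by
    refine ContinuousOn.fun_smul (M := ℝ) ?_ (continuousOn_id (s := U))
    refine ContinuousOn.inv₀ ((stmt6m_continuous T that hN).abs.continuousOn) ?_
    intro f hf
    exact abs_ne_zero.mpr (hmneg f hf).ne
  refine ⟨hEq, ?_, ?_⟩
  · -- compactness
    have hSphcl : IsClosed Sph := by
      refine IsClosed.inter ?_ ?_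
      · exact isClosed_eq (continuous_finset_sum _ fun k _ => (continuous_apply k).pow 2)
          continuous_const
      · have h2 : IsClosed {f : Fin M → ℝ | ∀ k, 0 ≤ f k} := by
          have e : {f : Fin M → ℝ | ∀ k, 0 ≤ f k} = ⋂ k, {f | 0 ≤ f k} := by
            ext f; simp [Set.mem_iInter]
          rw [e]
          exact isClosed_iInter fun k => isClosed_le continuous_const (continuous_apply k)
        exact h2
    have hSphbd : Sph ⊆ Metric.closedBall 0 ε := by
      intro f hf
      rw [Metric.mem_closedBall, dist_zero_right]
      rw [pi_norm_le_iff_of_nonneg hε.le]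
      intro k
      rw [Real.norm_eq_abs, abs_le]
      constructor
      · linarith [hf.2 k]
      · nlinarith [hf.1, Finset.single_le_sum (fun j (_ : j ∈ Finset.univ) => sq_nonneg (f j))
          (Finset.mem_univ k), hf.2 k]
    have hSphc : IsCompact Sph :=
      (isCompact_closedBall (0 : Fin M → ℝ) ε).of_isClosed_subset hSphcl hSphbd
    rw [hEq]
    exact hSphc.image_of_continuousOn (hgcont.mono hSphU)
  · -- connectedness
    have hEqU : S = g '' U := by
      apply Set.Subset.antisymm
      · intro f hf
        exact ⟨f, hSU hf, hgS f hf⟩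
      · rintro f ⟨x, hx, rfl⟩
        exact hgU x hx
    rw [hEqU]
    refine ⟨?_, (stmt6_orthant_preconnected hM).image g hgcont⟩
    refine ⟨g (fun _ => 1), Set.mem_image_of_mem g ?_⟩
    refine ⟨fun k => zero_le_one, ?_⟩
    intro h
    have := congrFun h ⟨0, hM⟩
    norm_num at this
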